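/- Let 2 ≤ m < q. The injection code Inj(m,q), consisting of all m-tuples over Q with pairwise distinct entries, is neighbour transitive in H(m,q), has automorphism group Aut(Inj(m,q)) = Diag_m(S_q) ⋊ L, and has minimum distance δ = 1. -/

import Mathlib

open Equiv Pointwise

section HammingDefs

variable {I : Type*} [Fintype I] [DecidableEq I] {q : ℕ}

/-- The permutation of the vertex set of the Hamming graph `H(I,q)` induced by the
letter permutations `g i` (acting coordinatewise) followed by the coordinate
permutation `σ`:  `(α^x)_i = g_{σ⁻¹ i} (α_{σ⁻¹ i})`. -/
def tvp (g : I → Equiv.Perm (Fin q)) (σ : Equiv.Perm I) : Equiv.Perm (I → Fin q) where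
  toFun α i := g (σ⁻¹ i) (α (σ⁻¹ i))
  invFun β i := (g i)⁻¹ (β (σ i))
  left_inv α := by funext i; simp
  right_inv β := by funext i; simp

/-- The automorphism group of the Hamming graph `H(I,q)`: all permutations of the
vertex set preserving adjacency (Hamming distance 1). -/
def autH (I : Type*) [Fintype I] [DecidableEq I] (q : ℕ) :
    Subgroup (Equiv.Perm (I → Fin q)) where
  carrier := {y | ∀ α β : I → Fin q, hammingDist (y α) (y β) = 1 ↔ hammingDist α β = 1}
  one_mem' := by intro α β; simp
  mul_mem' := by
    intro a b ha hb α β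
    rw [Equiv.Perm.mul_apply, Equiv.Perm.mul_apply, ha, hb]
  inv_mem' := by
    intro a ha α β
    simpa using (ha (a⁻¹ α) (a⁻¹ β)).symm

/-- The homomorphism `S_q × S_I → Sym(V(H(I,q)))` whose image is `Diag(S_q) ⋊ L`. -/
def diagLHom (I : Type*) [Fintype I] [DecidableEq I] (q : ℕ) :
    Equiv.Perm (Fin q) × Equiv.Perm I →* Equiv.Perm (I → Fin q) where
  toFun x := tvp (fun _ => x.1) x.2
  map_one' := by
    ext α i
    simp [tvp]
  map_mul' x y := by
    ext α i
    simp [tvp, mul_inv_rev]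

/-- The subgroup `Diag_I(S_q) ⋊ L` of the automorphism group of `H(I,q)`. -/
def diagL (I : Type*) [Fintype I] [DecidableEq I] (q : ℕ) :
    Subgroup (Equiv.Perm (I → Fin q)) :=
  (diagLHom I q).range

/-- The subgroup `L` of pure coordinate permutations of `H(I,q)`. -/
def permL (I : Type*) [Fintype I] [DecidableEq I] (q : ℕ) :
    Subgroup (Equiv.Perm (I → Fin q)) :=
  ((diagLHom I q).comp (MonoidHom.inr (Equiv.Perm (Fin q)) (Equiv.Perm I))).range

/-- Distance from a vertex to a code. -/
noncomputable def distC (γ : I → Fin q) (C : Set (I → Fin q)) : ℕ :=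
  sInf {d | ∃ β ∈ C, hammingDist γ β = d}

/-- The cell `C_i` of the distance partition of the code `C`. -/
def cell (C : Set (I → Fin q)) (i : ℕ) : Set (I → Fin q) :=
  {γ | distC γ C = i}

/-- The covering radius of the code `C`. -/
noncomputable def covRad (C : Set (I → Fin q)) : ℕ :=
  sSup {d | ∃ γ : I → Fin q, distC γ C = d}

/-- The minimum distance of the code `C`. -/
noncomputable def minDist (C : Set (I → Fin q)) : ℕ :=
  sInf {d | ∃ β ∈ C, ∃ γ ∈ C, β ≠ γ ∧ hammingDist β γ = d}

/-- `S` is an orbit of the subgroup `X` of permutations of the vertex set. -/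
def IsOrbitOf (X : Subgroup (Equiv.Perm (I → Fin q))) (S : Set (I → Fin q)) : Prop :=
  ∃ v, S = {w | ∃ x ∈ X, x v = w}

/-- `C` is `X`-neighbour transitive: `X` is a group of automorphisms of the Hamming
graph, and both `C` and its set of neighbours `C_1` are `X`-orbits. -/
def NbrTransitive (X : Subgroup (Equiv.Perm (I → Fin q))) (C : Set (I → Fin q)) : Prop :=
  X ≤ autH I q ∧ IsOrbitOf X C ∧ IsOrbitOf X (cell C 1)

/-- `C` is `X`-completely transitive: every cell of the distance partition is an `X`-orbit. -/
def ComplTransitive (X : Subgroup (Equiv.Perm (I → Fin q))) (C : Set (I → Fin q)) : Prop :=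
  X ≤ autH I q ∧ ∀ i ≤ covRad C, IsOrbitOf X (cell C i)

/-- `C` is diagonally `X`-neighbour transitive. -/
def DiagNbrTransitive (X : Subgroup (Equiv.Perm (I → Fin q))) (C : Set (I → Fin q)) : Prop :=
  NbrTransitive X C ∧ X ≤ diagL I q

/-- The automorphism group of the code `C`: the setwise stabiliser of `C` in the
automorphism group of the Hamming graph. -/
def autCode (C : Set (I → Fin q)) : Subgroup (Equiv.Perm (I → Fin q)) :=
  autH I q ⊓ MulAction.stabilizer (Equiv.Perm (I → Fin q)) C

/-- Number of occurrences of the letter `a` in the vertex `α`. -/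
def cnt (α : I → Fin q) (a : Fin q) : ℕ :=
  (Finset.univ.filter fun i => α i = a).card

/-- The composition `Q(α)` of a vertex: the set of pairs `(a, p)` such that the letter `a`
occurs exactly `p > 0` times in `α`. -/
def compOf (α : I → Fin q) : Set (Fin q × ℕ) :=
  {x | 0 < x.2 ∧ cnt α x.1 = x.2}

/-- `Num(α)`: the set of pairs `(p, s)` such that exactly `s > 0` distinct letters occur
exactly `p > 0` times in `α`. -/
def numOf (α : I → Fin q) : Set (ℕ × ℕ) :=
  {x | 0 < x.1 ∧ 0 < x.2 ∧ (Finset.univ.filter fun a => cnt α a = x.1).card = x.2}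

/-- The repetition code `Rep(I,q)`. -/
def repCode (I : Type*) [Fintype I] [DecidableEq I] (q : ℕ) : Set (I → Fin q) :=
  {α | ∃ a, α = fun _ => a}

/-- The injection code `Inj(I,q)`: all tuples with pairwise distinct entries. -/
def injCode (I : Type*) [Fintype I] [DecidableEq I] (q : ℕ) : Set (I → Fin q) :=
  {α | Function.Injective α}

/-- The code `All(pq,q)`: all vertices in which every letter occurs exactly `p` times. -/
def allCode (I : Type*) [Fintype I] [DecidableEq I] (q p : ℕ) : Set (I → Fin q) :=
  {α | ∀ a, cnt α a = p}

/-- `C` is `s`-regular. -/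
def RegularUpTo (C : Set (I → Fin q)) (s : ℕ) : Prop :=
  ∀ i ≤ s, ∀ γ ∈ cell C i, ∀ γ' ∈ cell C i, ∀ k : ℕ,
    {β ∈ C | hammingDist γ β = k}.ncard = {β ∈ C | hammingDist γ' β = k}.ncard

/-- `C` is completely regular. -/
def ComplRegular (C : Set (I → Fin q)) : Prop :=
  RegularUpTo C (covRad C)

/-- `C` is a constant composition code: every letter occurs the same positive number of
times in every codeword. -/
def IsCCC (C : Set (I → Fin q)) : Prop :=
  C.Nonempty ∧ ∃ f : Fin q → ℕ, (∀ a, 0 < f a) ∧ ∀ β ∈ C, ∀ a, cnt β a = f a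

end HammingDefs

section Weight

/-- The weight of a binary vertex: number of nonzero entries. -/
def wt {m : ℕ} (α : Fin m → Fin 2) : ℕ :=
  (Finset.univ.filter fun i => α i ≠ 0).card

/-- The code `W([m/2],2)`: binary `m`-tuples of weight `(m+1)/2` or `(m-1)/2`. -/
def wCode (m : ℕ) : Set (Fin m → Fin 2) :=
  {α | wt α = (m+1)/2 ∨ wt α = (m-1)/2}

/-- The code `W([m/2],2)` over a general alphabet (used when `q = 2`): vertices in which
one letter occurs `(m+1)/2` times and another `(m-1)/2` times. -/
def wCodeGen (m q : ℕ) : Set (Fin m → Fin q) :=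
  {α | ∃ a b : Fin q, a ≠ b ∧ cnt α a = (m+1)/2 ∧ cnt α b = (m-1)/2}

end Weight

section PermCodes

/-- The vertex `α(g) = (1^g, …, q^g)` of `H(q,q)` associated with a permutation `g`. -/
def alphaVtx {q : ℕ} (g : Equiv.Perm (Fin q)) : Fin q → Fin q := fun i => g i

/-- The permutation code generated by a set `T` of permutations. -/
def permCode {q : ℕ} (T : Set (Equiv.Perm (Fin q))) : Set (Fin q → Fin q) :=
  alphaVtx '' T

end PermCodes

section Repetition

variable {I : Type*} [Fintype I] [DecidableEq I] {q : ℕ}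

/-- The `p`-fold repetition `rep_p(α) = (α,…,α)`, a vertex of `H(p·|I|, q)`. -/
def repv (p : ℕ) (α : I → Fin q) : Fin p × I → Fin q := fun ji => α ji.2

/-- The `p`-fold repetition code `Rep_p(C)`. -/
def repCodeP (p : ℕ) (C : Set (I → Fin q)) : Set (Fin p × I → Fin q) :=
  repv p '' C

/-- The homomorphism `Sym(V(H(I,q))) × S_p → Sym(V(H(p·|I|,q)))`: the pair `(x,σ)` acts on
`p`-tuples of vertices by `(α_1,…,α_p) ↦ (α_{σ⁻¹(1)}^x, …, α_{σ⁻¹(p)}^x)`. -/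
def repHom (p : ℕ) (I : Type*) [Fintype I] [DecidableEq I] (q : ℕ) :
    Equiv.Perm (I → Fin q) × Equiv.Perm (Fin p) →* Equiv.Perm (Fin p × I → Fin q) where
  toFun x :=
    { toFun := fun β ji => x.1 (fun i => β (x.2⁻¹ ji.1, i)) ji.2
      invFun := fun β ji => x.1⁻¹ (fun i => β (x.2 ji.1, i)) ji.2
      left_inv := by intro β; funext ji; simp
      right_inv := by intro β; funext ji; simp }
  map_one' := by ext β ji; simp
  map_mul' x y := by ext β ji; simp [mul_inv_rev]

end Repetition

set_option linter.unusedSectionVars false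
section Aux
open Finset
variable {I : Type*} [Fintype I] [DecidableEq I] {q : ℕ}

lemma tvp_apply (g : I → Equiv.Perm (Fin q)) (σ : Equiv.Perm I) (α : I → Fin q) (i : I) :
    tvp g σ α i = g (σ⁻¹ i) (α (σ⁻¹ i)) := rfl

lemma hammingDist_tvp (g : I → Equiv.Perm (Fin q)) (σ : Equiv.Perm I) (α β : I → Fin q) :
    hammingDist (tvp g σ α) (tvp g σ β) = hammingDist α β := by
  unfold hammingDist
  apply Finset.card_bij' (fun i _ => σ⁻¹ i) (fun i _ => σ i)
  · intro i hi
    simp only [mem_filter, mem_univ, true_and] at hi ⊢; simp only [tvp_apply] at hi ⊢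
    intro h
    exact hi (by rw [h])
  · intro i hi
    simp only [mem_filter, mem_univ, true_and] at hi ⊢; simp only [tvp_apply, Equiv.Perm.coe_inv, Equiv.symm_apply_apply] at hi ⊢
    intro h
    exact hi ((g i).injective h)
  · intro i _; simp
  · intro i _; simp

lemma tvp_mem_autH (g : I → Equiv.Perm (Fin q)) (σ : Equiv.Perm I) :
    tvp g σ ∈ autH I q := by
  intro α β
  rw [hammingDist_tvp]

lemma diagL_le_autH : diagL I q ≤ autH I q := by
  rintro x ⟨⟨h, σ⟩, rfl⟩
  exact tvp_mem_autH (fun _ => h) σ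

lemma exists_perm_comp {α : Type*} {β : Type*} [Fintype β] [DecidableEq β]
    (u w : α → β) (hu : Function.Injective u) (hw : Function.Injective w) :
    ∃ h : Equiv.Perm β, ∀ a, h (u a) = w a := by
  classical
  let e : {x // x ∈ Set.range u} ≃ {x // x ∈ Set.range w} :=
    (Equiv.ofInjective u hu).symm.trans (Equiv.ofInjective w hw)
  refine ⟨e.extendSubtype, fun a => ?_⟩
  rw [e.extendSubtype_apply_of_mem (u a) ⟨a, rfl⟩]
  show ((Equiv.ofInjective w hw) ((Equiv.ofInjective u hu).symm ⟨u a, ⟨a, rfl⟩⟩) : β) = w a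
  have : (Equiv.ofInjective u hu).symm ⟨u a, ⟨a, rfl⟩⟩ = a := by
    apply (Equiv.ofInjective u hu).injective
    simp [Equiv.apply_ofInjective_symm]
  rw [this]
  simp [Equiv.ofInjective]

end Aux

section Aux2
open Finset
variable {I : Type*} [Fintype I] [DecidableEq I] {q : ℕ}

/-- If `hammingDist α β = d ≥ 1`, there is `γ` with `dist α γ = 1` and `dist γ β = d - 1`. -/
lemma exists_step {α β : I → Fin q} (h : 1 ≤ hammingDist α β) :
    ∃ γ : I → Fin q, hammingDist α γ = 1 ∧ hammingDist γ β = hammingDist α β - 1 := by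
  have hne : ({i | α i ≠ β i} : Finset I).Nonempty := by
    exact Finset.card_pos.mp h
  obtain ⟨i, hi⟩ := hne
  simp only [Finset.mem_filter, Finset.mem_univ, true_and] at hi
  refine ⟨Function.update α i (β i), ?_, ?_⟩
  · unfold hammingDist
    rw [Finset.card_eq_one]
    refine ⟨i, ?_⟩
    ext j
    simp only [Finset.mem_filter, Finset.mem_univ, true_and, Finset.mem_singleton]
    by_cases hj : j = i
    · subst hj; simp [Function.update_self, hi]
    · simp [Function.update_of_ne hj, hj]
  · unfold hammingDist
    have : ({j | Function.update α i (β i) j ≠ β j} : Finset I)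
        = ({j | α j ≠ β j} : Finset I).erase i := by
      ext j
      simp only [Finset.mem_filter, Finset.mem_univ, true_and, Finset.mem_erase]
      by_cases hj : j = i
      · subst hj; simp [Function.update_self]
      · simp [Function.update_of_ne hj, hj]
    rw [this, Finset.card_erase_of_mem (by simp [hi])]

lemma autH_dist_le {y : Equiv.Perm (I → Fin q)} (hy : y ∈ autH I q) (α β : I → Fin q) :
    hammingDist (y α) (y β) ≤ hammingDist α β := by
  generalize hd : hammingDist α β = d
  induction d using Nat.strong_induction_on generalizing α β with
  | _ d ih =>
    match d, hd with
    | 0, hd => rw [hammingDist_eq_zero.mp hd]; simp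
    | 1, hd => exact le_of_eq ((hy α β).mpr hd)
    | (n+2), hd =>
      obtain ⟨γ, h1, h2⟩ := exists_step (α := α) (β := β) (by omega)
      rw [hd] at h2
      calc hammingDist (y α) (y β)
          ≤ hammingDist (y α) (y γ) + hammingDist (y γ) (y β) := hammingDist_triangle _ _ _
        _ ≤ 1 + (n + 1) := by
            have e1 : hammingDist (y α) (y γ) = 1 := (hy α γ).mpr h1
            have e2 : hammingDist (y γ) (y β) ≤ n + 1 := ih (n+1) (by omega) γ β (by omega)
            omega
        _ = n + 2 := by omega

lemma autH_dist {y : Equiv.Perm (I → Fin q)} (hy : y ∈ autH I q) (α β : I → Fin q) :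
    hammingDist (y α) (y β) = hammingDist α β := by
  refine le_antisymm (autH_dist_le hy α β) ?_
  have := autH_dist_le ((autH I q).inv_mem hy) (y α) (y β)
  simpa using this

end Aux2

section Aux3
open Finset
variable {I : Type*} [Fintype I] [DecidableEq I] {q : ℕ}

set_option linter.unusedSectionVars false

lemma dist_update_const (β : I → Fin q) (i : I) (z a : Fin q) :
    hammingDist β (Function.update (fun _ => z) i a)
      = ((Finset.univ.filter fun j => β j ≠ z).erase i).card + (if β i = a then 0 else 1) := by
  unfold hammingDist
  by_cases h : β i = a
  · rw [if_pos h, Nat.add_zero]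
    congr 1
    ext j
    simp only [Finset.mem_filter, Finset.mem_univ, true_and, Finset.mem_erase]
    by_cases hj : j = i
    · subst hj; simp [Function.update_self, h]
    · simp only [Function.update_of_ne hj, hj, ne_eq, not_false_eq_true, true_and]
  · rw [if_neg h]
    have hset : (Finset.univ.filter fun j => β j ≠ Function.update (fun _ => z) i a j)
        = insert i ((Finset.univ.filter fun j => β j ≠ z).erase i) := by
      ext j
      simp only [Finset.mem_filter, Finset.mem_univ, true_and, Finset.mem_insert,
        Finset.mem_erase]
      by_cases hj : j = i
      · subst hj; simp [Function.update_self, h]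
      · simp only [Function.update_of_ne hj, hj, ne_eq, not_false_eq_true, true_and,
          false_or]
    rw [hset, Finset.card_insert_of_notMem (Finset.notMem_erase _ _)]

lemma wt_eq (β : I → Fin q) (i : I) (z : Fin q) :
    hammingDist β (fun _ => z)
      = ((Finset.univ.filter fun j => β j ≠ z).erase i).card + (if β i = z then 0 else 1) := by
  have h2 : Function.update (fun _ => z) i z = fun _ => z := Function.update_eq_self i _
  have := dist_update_const β i z z
  rwa [h2] at this

lemma wt_update_one {i : I} {z a : Fin q} (ha : a ≠ z) :
    hammingDist (Function.update (fun _ => z) i a) (fun _ => z) = 1 := by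
  unfold hammingDist
  rw [Finset.card_eq_one]
  refine ⟨i, ?_⟩
  ext j
  simp only [Finset.mem_filter, Finset.mem_univ, true_and, Finset.mem_singleton]
  by_cases hj : j = i
  · subst hj; simp [Function.update_self, ha]
  · simp [Function.update_of_ne hj, hj]

lemma weight_one_iff (β : I → Fin q) (z : Fin q) :
    hammingDist β (fun _ => z) = 1
      ↔ ∃ i a, a ≠ z ∧ β = Function.update (fun _ => z) i a := by
  constructor
  · intro h
    unfold hammingDist at h
    rw [Finset.card_eq_one] at h
    obtain ⟨i, hi⟩ := h
    have hmem : ∀ j, β j ≠ z ↔ j = i := by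
      intro j
      have := Finset.ext_iff.mp hi j
      simpa using this
    refine ⟨i, β i, (hmem i).mpr rfl, ?_⟩
    funext j
    by_cases hj : j = i
    · subst hj; simp [Function.update_self]
    · rw [Function.update_of_ne hj]
      by_contra hne
      exact hj ((hmem j).mp hne)
  · rintro ⟨i, a, ha, rfl⟩
    exact wt_update_one ha

lemma dist_update_update_same (i : I) (z a b : Fin q) (hab : a ≠ b) :
    hammingDist (Function.update (fun _ => z) i a) (Function.update (fun _ => z) i b) = 1 := by
  unfold hammingDist
  rw [Finset.card_eq_one]
  refine ⟨i, ?_⟩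
  ext j
  simp only [Finset.mem_filter, Finset.mem_univ, true_and, Finset.mem_singleton]
  by_cases hj : j = i
  · subst hj; simp [Function.update_self, hab]
  · simp [Function.update_of_ne hj, hj]

lemma dist_update_update_ne {i j : I} (hij : i ≠ j) {z a b : Fin q}
    (ha : a ≠ z) (hb : b ≠ z) :
    hammingDist (Function.update (fun _ => z) i a) (Function.update (fun _ => z) j b) = 2 := by
  unfold hammingDist
  have hset : (Finset.univ.filter fun k =>
      Function.update (fun _ => z) i a k ≠ Function.update (fun _ => z) j b k) = {i, j} := by
    ext k
    simp only [Finset.mem_filter, Finset.mem_univ, true_and, Finset.mem_insert,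
      Finset.mem_singleton]
    by_cases hk : k = i
    · subst hk
      simp [Function.update_self, Function.update_of_ne hij, ha]
    · by_cases hk' : k = j
      · subst hk'
        have l : Function.update (fun _ => z) i a k = z := Function.update_of_ne (Ne.symm hij) _ _
        have r : Function.update (fun _ => z) k b k = b := Function.update_self _ _ _
        rw [l, r]
        exact iff_of_true (fun h => hb h.symm) (Or.inr rfl)
      · simp [Function.update_of_ne hk, Function.update_of_ne hk', hk, hk']
  rw [hset, Finset.card_insert_of_notMem (by simp [hij]), Finset.card_singleton]

end Aux3

section Aux4
open Finset
variable {I : Type*} [Fintype I] [DecidableEq I] {q : ℕ}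

set_option linter.unusedSectionVars false

lemma tvp_mul (g g' : I → Equiv.Perm (Fin q)) (σ σ' : Equiv.Perm I) :
    tvp g σ * tvp g' σ' = tvp (fun j => g (σ' j) * g' j) (σ * σ') := by
  ext α i
  simp only [Equiv.Perm.mul_apply, tvp_apply, mul_inv_rev, Equiv.Perm.mul_apply,
    Equiv.Perm.coe_inv, Equiv.apply_symm_apply]

lemma tvp_inv (g : I → Equiv.Perm (Fin q)) (σ : Equiv.Perm I) :
    (tvp g σ)⁻¹ = tvp (fun j => (g (σ⁻¹ j))⁻¹) σ⁻¹ := by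
  rw [inv_eq_iff_mul_eq_one, tvp_mul]
  ext α i
  simp [tvp_apply]

/-- Every automorphism of the Hamming graph fixing the constant word `z` is a `tvp`. -/
lemma autH_eq_tvp_of_fixes {y : Equiv.Perm (I → Fin q)} (hy : y ∈ autH I q)
    {z o : Fin q} (hzo : o ≠ z) (hy0 : y (fun _ => z) = fun _ => z) :
    ∃ (g : I → Equiv.Perm (Fin q)) (σ : Equiv.Perm I), y = tvp g σ := by
  classical
  have hwt : ∀ α, hammingDist (y α) (fun _ => z) = hammingDist α (fun _ => z) := by
    intro α
    conv_lhs => rw [← hy0]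
    exact autH_dist hy α _
  have h1 : ∀ (i : I) (a : Fin q), ∃ (j : I) (b : Fin q),
      (a ≠ z → b ≠ z ∧ y (Function.update (fun _ => z) i a) = Function.update (fun _ => z) j b) := by
    intro i a
    by_cases ha : a ≠ z
    · have hw1 : hammingDist (y (Function.update (fun _ => z) i a)) (fun _ => z) = 1 := by
        rw [hwt]; exact wt_update_one ha
      obtain ⟨j, b, hb, hEq⟩ := (weight_one_iff _ _).mp hw1
      exact ⟨j, b, fun _ => ⟨hb, hEq⟩⟩
    · exact ⟨i, a, fun h => absurd h ha⟩
  choose J B hJB using h1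
  have hJo : ∀ i a, a ≠ z → J i a = J i o := by
    intro i a ha
    by_cases hao : a = o
    · rw [hao]
    · by_contra hne
      have d1 : hammingDist (y (Function.update (fun _ => z) i a))
          (y (Function.update (fun _ => z) i o)) = 1 := by
        rw [autH_dist hy]; exact dist_update_update_same i z a o hao
      rw [(hJB i a ha).2, (hJB i o hzo).2] at d1
      have d2 := dist_update_update_ne hne (hJB i a ha).1 (hJB i o hzo).1
      omega
  have hσinj : Function.Injective (fun i => J i o) := by
    intro i i' h
    simp only at h
    by_contra hne
    have d2 : hammingDist (y (Function.update (fun _ => z) i o))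
        (y (Function.update (fun _ => z) i' o)) = 2 := by
      rw [autH_dist hy]; exact dist_update_update_ne hne hzo hzo
    rw [(hJB i o hzo).2, (hJB i' o hzo).2, h] at d2
    by_cases hbb : B i o = B i' o
    · rw [hbb, hammingDist_self] at d2; omega
    · have d1 := dist_update_update_same (J i' o) z _ _ hbb
      rw [d1] at d2; omega
  have hBinj : ∀ i, Function.Injective
      (fun a => if a = z then z else B i a) := by
    intro i a a' h
    simp only at h
    by_cases ha : a = z <;> by_cases ha' : a' = z
    · rw [ha, ha']
    · rw [if_pos ha, if_neg ha'] at h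
      exact absurd h.symm ((hJB i a' ha').1)
    · rw [if_neg ha, if_pos ha'] at h
      exact absurd h ((hJB i a ha).1)
    · rw [if_neg ha, if_neg ha'] at h
      by_contra hne
      have d1 : hammingDist (y (Function.update (fun _ => z) i a))
          (y (Function.update (fun _ => z) i a')) = 1 := by
        rw [autH_dist hy]; exact dist_update_update_same i z a a' hne
      rw [(hJB i a ha).2, (hJB i a' ha').2, hJo i a ha, hJo i a' ha', h,
        hammingDist_self] at d1
      omega
  -- key evaluation
  have key : ∀ (α : I → Fin q) (i : I),
      y α (J i o) = if α i = z then z else B i (α i) := by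
    intro α i
    by_cases hz : α i = z
    · rw [if_pos hz]
      have hd : hammingDist α (Function.update (fun _ => z) i o)
          = hammingDist α (fun _ => z) + 1 := by
        rw [dist_update_const α i z o, wt_eq α i z,
          if_neg (fun h => hzo (h.symm.trans hz)), if_pos hz]
      have hd' : hammingDist (y α) (Function.update (fun _ => z) (J i o) (B i o))
          = hammingDist (y α) (fun _ => z) + 1 := by
        rw [← (hJB i o hzo).2, autH_dist hy, hwt α, hd]
      rw [dist_update_const (y α) (J i o) z (B i o), wt_eq (y α) (J i o) z] at hd'
      by_contra h'
      rw [if_neg h'] at hd'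
      split_ifs at hd' <;> omega
    · rw [if_neg hz]
      have hd : hammingDist α (Function.update (fun _ => z) i (α i)) + 1
          = hammingDist α (fun _ => z) := by
        rw [dist_update_const α i z (α i), wt_eq α i z, if_pos rfl, if_neg hz]
      have hd' : hammingDist (y α) (Function.update (fun _ => z) (J i o) (B i (α i))) + 1
          = hammingDist (y α) (fun _ => z) := by
        rw [← hJo i (α i) hz, ← (hJB i (α i) hz).2, autH_dist hy, hwt α]
        exact hd
      rw [dist_update_const (y α) (J i o) z (B i (α i)), wt_eq (y α) (J i o) z] at hd'
      by_contra h'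
      rw [if_neg h'] at hd'
      split_ifs at hd' <;> omega
  -- assemble
  refine ⟨fun i => Equiv.ofBijective _ (Finite.injective_iff_bijective.mp (hBinj i)),
    Equiv.ofBijective _ (Finite.injective_iff_bijective.mp hσinj), ?_⟩
  set σ : Equiv.Perm I := Equiv.ofBijective _ (Finite.injective_iff_bijective.mp hσinj) with hσ
  ext α j
  obtain ⟨i, rfl⟩ : ∃ i, σ i = j := ⟨σ⁻¹ j, by simp⟩
  rw [tvp_apply, Equiv.Perm.coe_inv, Equiv.symm_apply_apply]
  exact congrArg Fin.val (key α i)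

end Aux4

section Aux5
open Finset
variable {I : Type*} [Fintype I] [DecidableEq I] {q : ℕ}

set_option linter.unusedSectionVars false

lemma autH_eq_tvp {y : Equiv.Perm (I → Fin q)} (hy : y ∈ autH I q) (hq : 2 ≤ q) :
    ∃ (g : I → Equiv.Perm (Fin q)) (σ : Equiv.Perm I), y = tvp g σ := by
  classical
  have h0 : (0 : ℕ) < q := by omega
  have h1 : (1 : ℕ) < q := by omega
  set z : Fin q := ⟨0, h0⟩
  set o : Fin q := ⟨1, h1⟩
  have hzo : o ≠ z := by simp [o, z, Fin.ext_iff]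
  set t : Equiv.Perm (I → Fin q) := tvp (fun i => Equiv.swap (y (fun _ => z) i) z) 1 with ht
  have ht0 : (t * y) (fun _ => z) = fun _ => z := by
    funext i
    simp only [Equiv.Perm.mul_apply, ht, tvp_apply, inv_one, Equiv.Perm.one_apply]
    exact Equiv.swap_apply_left _ _
  have hty : t * y ∈ autH I q := (autH I q).mul_mem (tvp_mem_autH _ _) hy
  obtain ⟨g, σ, hgs⟩ := autH_eq_tvp_of_fixes hty hzo ht0
  have hyeq : y = t⁻¹ * tvp g σ := by rw [← hgs, inv_mul_cancel_left]
  rw [ht, tvp_inv, tvp_mul] at hyeq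
  exact ⟨_, _, hyeq⟩

lemma distC_eq_one_iff (C : Set (I → Fin q)) (γ : I → Fin q) :
    distC γ C = 1 ↔ γ ∉ C ∧ ∃ β ∈ C, hammingDist γ β = 1 := by
  unfold distC
  have hzero : (0 ∈ {d | ∃ β ∈ C, hammingDist γ β = d}) ↔ γ ∈ C := by
    constructor
    · rintro ⟨β, hβ, hd⟩
      rwa [hammingDist_eq_zero.mp hd]
    · intro h; exact ⟨γ, h, hammingDist_self γ⟩
  constructor
  · intro h
    have hne : {d | ∃ β ∈ C, hammingDist γ β = d}.Nonempty := by
      by_contra hemp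
      rw [Set.not_nonempty_iff_eq_empty] at hemp
      rw [hemp, Nat.sInf_empty] at h
      omega
    have hmem := Nat.sInf_mem hne
    rw [h] at hmem
    refine ⟨fun hC => ?_, hmem⟩
    have : sInf {d | ∃ β ∈ C, hammingDist γ β = d} ≤ 0 := Nat.sInf_le (hzero.mpr hC)
    omega
  · rintro ⟨hγC, β, hβ, hd⟩
    have hle : sInf {d | ∃ β ∈ C, hammingDist γ β = d} ≤ 1 := Nat.sInf_le ⟨β, hβ, hd⟩
    have hmem := Nat.sInf_mem (⟨1, β, hβ, hd⟩ :
      Set.Nonempty {d | ∃ β ∈ C, hammingDist γ β = d})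
    rcases Nat.lt_or_ge (sInf {d | ∃ β ∈ C, hammingDist γ β = d}) 1 with h | h
    · interval_cases h' : (sInf {d | ∃ β ∈ C, hammingDist γ β = d})
      · exact absurd (hzero.mp (h' ▸ hmem)) hγC
    · omega

lemma distC_smul {C : Set (I → Fin q)} {x : Equiv.Perm (I → Fin q)} (hx : x ∈ autH I q)
    (hstab : ∀ β, β ∈ C ↔ x β ∈ C) (γ : I → Fin q) :
    distC (x γ) C = distC γ C := by
  unfold distC
  congr 1
  ext d
  constructor
  · rintro ⟨β, hβ, hd⟩
    refine ⟨x⁻¹ β, ?_, ?_⟩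
    · rw [hstab]; simpa using hβ
    · rw [← hd, ← autH_dist hx γ (x⁻¹ β)]
      simp
  · rintro ⟨β, hβ, hd⟩
    exact ⟨x β, (hstab β).mp hβ, by rw [autH_dist hx]; exact hd⟩

end Aux5

section Aux6
open Finset
variable {m q : ℕ}

set_option linter.unusedSectionVars false

lemma tvp_diag_injCode (h : Equiv.Perm (Fin q)) (σ : Equiv.Perm (Fin m)) (β : Fin m → Fin q) :
    tvp (fun _ => h) σ β ∈ injCode (Fin m) q ↔ β ∈ injCode (Fin m) q := by
  constructor
  · intro hinj a b hab
    have hsab : tvp (fun _ => h) σ β (σ a) = tvp (fun _ => h) σ β (σ b) := by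
      simp only [tvp_apply, Equiv.Perm.coe_inv, Equiv.symm_apply_apply]
      rw [hab]
    exact σ.injective (hinj hsab)
  · intro hβ k l hkl
    simp only [tvp_apply] at hkl
    have := hβ (h.injective hkl)
    exact σ⁻¹.injective this

lemma diagL_stab {x : Equiv.Perm (Fin m → Fin q)} (hx : x ∈ diagL (Fin m) q)
    (β : Fin m → Fin q) : β ∈ injCode (Fin m) q ↔ x β ∈ injCode (Fin m) q := by
  obtain ⟨⟨h, σ⟩, rfl⟩ := hx
  exact (tvp_diag_injCode h σ β).symm

lemma exists_fresh (hmq : m < q) (γ : Fin m → Fin q) : ∃ c : Fin q, ∀ k, γ k ≠ c := by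
  by_contra hc
  push_neg at hc
  have hsub : (Finset.univ : Finset (Fin q)) ⊆ Finset.univ.image γ := by
    intro c _
    obtain ⟨k, hk⟩ := hc c
    exact Finset.mem_image.mpr ⟨k, Finset.mem_univ k, hk⟩
  have h1 := Finset.card_le_card hsub
  have h2 := Finset.card_image_le (s := (Finset.univ : Finset (Fin m))) (f := γ)
  simp only [Finset.card_univ, Fintype.card_fin] at h1 h2
  omega

lemma mem_cell_one_iff (hmq : m < q) (γ : Fin m → Fin q) :
    γ ∈ cell (injCode (Fin m) q) 1 ↔
      ∃ i j, i ≠ j ∧ γ i = γ j ∧ ∀ k l, k ≠ l → γ k = γ l →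
        (k = i ∧ l = j) ∨ (k = j ∧ l = i) := by
  have hcell : γ ∈ cell (injCode (Fin m) q) 1 ↔ distC γ (injCode (Fin m) q) = 1 :=
    Iff.rfl
  rw [hcell, distC_eq_one_iff]
  constructor
  · rintro ⟨hγ, β, hβ, hd⟩
    unfold hammingDist at hd
    obtain ⟨t, hfil⟩ := Finset.card_eq_one.mp hd
    have hsame : ∀ k, k ≠ t → γ k = β k := by
      intro k hk
      by_contra hne
      have : k ∈ ({t} : Finset (Fin m)) := hfil ▸ (by simp [hne])
      exact hk (Finset.mem_singleton.mp this)
    have hninj : ¬ Function.Injective γ := hγ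
    rw [Function.not_injective_iff] at hninj
    obtain ⟨i, j, hijeq, hij⟩ := hninj
    have ht_mem : ∀ k l, k ≠ l → γ k = γ l → k = t ∨ l = t := by
      intro k l hkl hkleq
      by_contra hcon
      push_neg at hcon
      exact hkl (hβ (by rw [← hsame k hcon.1, ← hsame l hcon.2]; exact hkleq))
    have huniq : ∀ k l, k ≠ t → l ≠ t → γ k = γ t → γ l = γ t → k = l := by
      intro k l hk hl hkt hlt
      by_contra hne
      exact hne (hβ (by rw [← hsame k hk, ← hsame l hl, hkt, hlt]))
    obtain ⟨u, hut, hγtu⟩ : ∃ u, u ≠ t ∧ γ t = γ u := by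
      rcases ht_mem i j hij hijeq with hk | hl
      · exact ⟨j, fun hjt => hij (hk ▸ hjt ▸ rfl), by rw [← hk]; exact hijeq⟩
      · exact ⟨i, fun hit => hij (hit.trans hl.symm), by rw [← hl]; exact hijeq.symm⟩
    refine ⟨t, u, fun h => hut h.symm, hγtu, ?_⟩
    intro k l hkl hkleq
    rcases ht_mem k l hkl hkleq with hk | hl
    · subst hk
      left
      have hlt : l ≠ k := fun h => hkl h.symm
      exact ⟨rfl, huniq l u hlt hut (hkleq.symm) hγtu.symm⟩
    · subst hl
      right
      refine ⟨huniq k u hkl hut hkleq hγtu.symm, rfl⟩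
  · rintro ⟨i, j, hij, hijeq, huniq⟩
    have hγ : γ ∉ injCode (Fin m) q := fun hinj => hij (hinj hijeq)
    obtain ⟨c, hc⟩ := exists_fresh hmq γ
    refine ⟨hγ, Function.update γ j c, ?_, ?_⟩
    · intro k l hkl
      by_cases hk : k = j <;> by_cases hl : l = j
      · rw [hk, hl]
      · rw [hk, Function.update_self, Function.update_of_ne hl] at hkl
        exact absurd hkl.symm (hc l)
      · rw [hl, Function.update_self, Function.update_of_ne hk] at hkl
        exact absurd hkl (hc k)
      · rw [Function.update_of_ne hk, Function.update_of_ne hl] at hkl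
        by_contra hne
        rcases huniq k l hne hkl with ⟨_, h2⟩ | ⟨h2, _⟩
        · exact hl h2
        · exact hk h2
    · unfold hammingDist
      rw [Finset.card_eq_one]
      refine ⟨j, ?_⟩
      ext k
      simp only [Finset.mem_filter, Finset.mem_univ, true_and, Finset.mem_singleton]
      by_cases hk : k = j
      · subst hk
        simp [Function.update_self, fun h => hc k h]
      · simp [Function.update_of_ne hk, hk]

end Aux6

section Aux7
open Finset
variable {m q : ℕ}

set_option linter.unusedSectionVars false

lemma vec2_inj {τ : Type*} {x y : τ} (h : x ≠ y) : Function.Injective ![x, y] := by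
  intro a b hab
  fin_cases a <;> fin_cases b <;> simp_all

lemma injCode_isOrbit (hmq : m < q) :
    IsOrbitOf (diagL (Fin m) q) (injCode (Fin m) q) := by
  classical
  set v0 : Fin m → Fin q := fun i => ⟨i.1, lt_trans i.2 hmq⟩ with hv0
  have hv0inj : Function.Injective v0 := by
    intro a b hab
    exact Fin.ext (by simpa [hv0, Fin.ext_iff] using hab)
  refine ⟨v0, ?_⟩
  ext w
  constructor
  · intro hw
    obtain ⟨h, hh⟩ := exists_perm_comp v0 w hv0inj hw
    refine ⟨diagLHom (Fin m) q (h, 1), ⟨(h, 1), rfl⟩, ?_⟩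
    funext k
    show h (v0 ((1 : Equiv.Perm (Fin m))⁻¹ k)) = w k
    simpa using hh k
  · rintro ⟨x, hx, rfl⟩
    exact (diagL_stab hx v0).mp hv0inj

lemma injCode_cell_one_isOrbit (hm : 2 ≤ m) (hmq : m < q) :
    IsOrbitOf (diagL (Fin m) q) (cell (injCode (Fin m) q) 1) := by
  classical
  set v0 : Fin m → Fin q := fun i => ⟨i.1, lt_trans i.2 hmq⟩ with hv0
  have hv0inj : Function.Injective v0 := by
    intro a b hab
    exact Fin.ext (by simpa [hv0, Fin.ext_iff] using hab)
  set i0 : Fin m := ⟨0, by omega⟩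
  set j0 : Fin m := ⟨1, by omega⟩
  have hij0 : i0 ≠ j0 := by simp [i0, j0, Fin.ext_iff]
  set γ0 : Fin m → Fin q := Function.update v0 j0 (v0 i0) with hγ0
  have hγ0i0 : γ0 i0 = v0 i0 := Function.update_of_ne hij0 _ _
  have hγ0j0 : γ0 j0 = v0 i0 := Function.update_self _ _ _
  have hγ0k : ∀ k, k ≠ j0 → γ0 k = v0 k := fun k hk => Function.update_of_ne hk _ _
  have hP0 : ∀ k l, k ≠ l → γ0 k = γ0 l → (k = i0 ∧ l = j0) ∨ (k = j0 ∧ l = i0) := by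
    intro k l hkl hkleq
    by_cases hk : k = j0 <;> by_cases hl : l = j0
    · exact absurd (hk.trans hl.symm) hkl
    · right
      refine ⟨hk, ?_⟩
      rw [hk, hγ0j0, hγ0k l hl] at hkleq
      exact hv0inj hkleq.symm
    · left
      refine ⟨?_, hl⟩
      rw [hl, hγ0j0, hγ0k k hk] at hkleq
      exact hv0inj hkleq
    · rw [hγ0k k hk, hγ0k l hl] at hkleq
      exact absurd (hv0inj hkleq) hkl
  have hγ0cell : γ0 ∈ cell (injCode (Fin m) q) 1 :=
    (mem_cell_one_iff hmq γ0).mpr ⟨i0, j0, hij0, hγ0i0.trans hγ0j0.symm, hP0⟩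
  refine ⟨γ0, ?_⟩
  ext w
  constructor
  · intro hw
    obtain ⟨i, j, hij, hweq, huniq⟩ := (mem_cell_one_iff hmq w).mp hw
    obtain ⟨σ, hσ⟩ := exists_perm_comp ![i0, j0] ![i, j] (vec2_inj hij0) (vec2_inj hij)
    have hσi0 : σ i0 = i := by simpa using hσ 0
    have hσj0 : σ j0 = j := by simpa using hσ 1
    have hσinvj : σ⁻¹ j = j0 := by rw [← hσj0]; simp
    have hσinvi : σ⁻¹ i = i0 := by rw [← hσi0]; simp
    have hwres : Function.Injective (fun k : {k : Fin m // k ≠ j} => w k.1) := by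
      intro ⟨k, hk⟩ ⟨l, hl⟩ hkl
      simp only at hkl
      by_contra hne
      have hne' : k ≠ l := fun h => hne (by simp [h])
      rcases huniq k l hne' hkl with ⟨_, h2⟩ | ⟨h2, _⟩
      · exact hl h2
      · exact hk h2
    have hγres : Function.Injective (fun k : {k : Fin m // k ≠ j} => γ0 (σ⁻¹ k.1)) := by
      intro ⟨k, hk⟩ ⟨l, hl⟩ hkl
      simp only at hkl
      by_contra hne
      have hne' : σ⁻¹ k ≠ σ⁻¹ l := by
        intro h
        exact hne (by simpa using σ⁻¹.injective h)
      rcases hP0 _ _ hne' hkl with ⟨_, h2⟩ | ⟨h2, _⟩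
      · exact hl (by rw [← hσinvj] at h2; simpa using σ⁻¹.injective h2)
      · exact hk (by rw [← hσinvj] at h2; simpa using σ⁻¹.injective h2)
    obtain ⟨h, hh⟩ := exists_perm_comp _ _ hγres hwres
    refine ⟨diagLHom (Fin m) q (h, σ), ⟨(h, σ), rfl⟩, ?_⟩
    funext k
    show h (γ0 (σ⁻¹ k)) = w k
    by_cases hk : k = j
    · subst hk
      have e1 : γ0 (σ⁻¹ k) = γ0 (σ⁻¹ i) := by
        rw [hσinvj, hσinvi, hγ0j0, hγ0i0]
      rw [e1]
      have := hh ⟨i, fun h' => hij h'⟩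
      simp only at this
      rw [this]
      exact hweq
    · exact hh ⟨k, hk⟩
  · rintro ⟨x, hx, rfl⟩
    have h1 : distC (x γ0) (injCode (Fin m) q) = distC γ0 (injCode (Fin m) q) :=
      distC_smul (diagL_le_autH hx) (diagL_stab hx) γ0
    show distC (x γ0) (injCode (Fin m) q) = 1
    rw [h1]
    exact hγ0cell

end Aux7

section Aux8
open Finset
variable {m q : ℕ}

set_option linter.unusedSectionVars false

lemma diagL_le_autCode : diagL (Fin m) q ≤ autCode (injCode (Fin m) q) := by
  intro x hx
  refine ⟨diagL_le_autH hx, ?_⟩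
  show x • (injCode (Fin m) q) = injCode (Fin m) q
  ext γ
  rw [Set.mem_smul_set_iff_inv_smul_mem]
  show x⁻¹ γ ∈ injCode (Fin m) q ↔ γ ∈ injCode (Fin m) q
  exact (diagL_stab ((diagL (Fin m) q).inv_mem hx) γ).symm

lemma autCode_le_diagL (hm : 2 ≤ m) (hmq : m < q) :
    autCode (injCode (Fin m) q) ≤ diagL (Fin m) q := by
  classical
  intro y hy
  obtain ⟨hy1, hy2⟩ := hy
  obtain ⟨g, σ, rfl⟩ := autH_eq_tvp hy1 (by omega)
  have hsmul : tvp g σ • (injCode (Fin m) q) = injCode (Fin m) q := hy2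
  have hstab : ∀ β, β ∈ injCode (Fin m) q → tvp g σ β ∈ injCode (Fin m) q := by
    intro β hβ
    have : (tvp g σ) • β ∈ tvp g σ • (injCode (Fin m) q) := Set.smul_mem_smul_set hβ
    rwa [hsmul] at this
  set v0 : Fin m → Fin q := fun i => ⟨i.1, lt_trans i.2 hmq⟩ with hv0
  have hv0inj : Function.Injective v0 := by
    intro a b hab
    exact Fin.ext (by simpa [hv0, Fin.ext_iff] using hab)
  have hgeq : ∀ (i i' : Fin m) (a : Fin q), g i a = g i' a := by
    intro i i' a
    by_cases hii : i = i'
    · rw [hii]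
    by_contra hne
    set b : Fin q := (g i')⁻¹ (g i a) with hb
    have hgb : g i' b = g i a := by simp [hb]
    have hab : a ≠ b := by
      intro h
      rw [← h] at hgb
      exact hne hgb.symm
    obtain ⟨h0, hh0⟩ := exists_perm_comp ![v0 i, v0 i'] ![a, b]
      (vec2_inj (fun h => hii (hv0inj h))) (vec2_inj hab)
    set α : Fin m → Fin q := fun k => h0 (v0 k) with hα
    have hαinj : α ∈ injCode (Fin m) q := fun k l hkl =>
      hv0inj (h0.injective hkl)
    have hαi : α i = a := by simpa [hα] using hh0 0
    have hαi' : α i' = b := by simpa [hα] using hh0 1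
    have himg := hstab α hαinj
    have hval : tvp g σ α (σ i) = tvp g σ α (σ i') := by
      simp only [tvp_apply, Equiv.Perm.coe_inv, Equiv.symm_apply_apply]
      rw [hαi, hαi', hgb]
    exact hii (σ.injective (himg hval))
  refine ⟨(g ⟨0, by omega⟩, σ), ?_⟩
  show tvp (fun _ => g ⟨0, by omega⟩) σ = tvp g σ
  ext α k
  simp only [tvp_apply]
  exact congrArg Fin.val (hgeq _ _ _)

lemma injCode_minDist (hm : 2 ≤ m) (hmq : m < q) :
    minDist (injCode (Fin m) q) = 1 := by
  classical
  set v0 : Fin m → Fin q := fun i => ⟨i.1, lt_trans i.2 hmq⟩ with hv0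
  have hv0inj : Function.Injective v0 := by
    intro a b hab
    exact Fin.ext (by simpa [hv0, Fin.ext_iff] using hab)
  obtain ⟨c, hc⟩ := exists_fresh hmq v0
  set i0 : Fin m := ⟨0, by omega⟩
  set γ1 : Fin m → Fin q := Function.update v0 i0 c with hγ1
  have hγ1inj : γ1 ∈ injCode (Fin m) q := by
    intro k l hkl
    rw [hγ1] at hkl
    by_cases hk : k = i0 <;> by_cases hl : l = i0
    · rw [hk, hl]
    · rw [hk, Function.update_self, Function.update_of_ne hl] at hkl
      exact absurd hkl.symm (hc l)
    · rw [hl, Function.update_self, Function.update_of_ne hk] at hkl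
      exact absurd hkl (hc k)
    · rw [Function.update_of_ne hk, Function.update_of_ne hl] at hkl
      exact hv0inj hkl
  have hne : v0 ≠ γ1 := by
    intro h
    have := congrFun h i0
    rw [hγ1, Function.update_self] at this
    exact hc i0 this
  have hdist : hammingDist v0 γ1 = 1 := by
    unfold hammingDist
    rw [Finset.card_eq_one]
    refine ⟨i0, ?_⟩
    ext k
    simp only [Finset.mem_filter, Finset.mem_univ, true_and, Finset.mem_singleton]
    by_cases hk : k = i0
    · subst hk
      simp only [hγ1, Function.update_self, Finset.mem_singleton]
      simpa using hc i0
    · simp [hγ1, Function.update_of_ne hk, hk]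
  have hmem : 1 ∈ {d | ∃ β ∈ injCode (Fin m) q, ∃ γ ∈ injCode (Fin m) q,
      β ≠ γ ∧ hammingDist β γ = d} := ⟨v0, hv0inj, γ1, hγ1inj, hne, hdist⟩
  unfold minDist
  have hle := Nat.sInf_le hmem
  have hsmem := Nat.sInf_mem (⟨1, hmem⟩ : Set.Nonempty _)
  obtain ⟨β, _, γ, _, hβγ, hd⟩ := hsmem
  have : sInf {d | ∃ β ∈ injCode (Fin m) q, ∃ γ ∈ injCode (Fin m) q,
      β ≠ γ ∧ hammingDist β γ = d} ≠ 0 := by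
    intro h0
    rw [h0] at hd
    exact hβγ (hammingDist_eq_zero.mp hd)
  omega

end Aux8

/-- Theorem 3.3(ii): for `2 ≤ m < q`, the injection code `Inj(m,q)` is
neighbour transitive, `Aut(Inj(m,q)) = Diag_m(S_q) ⋊ L`, and its minimum distance is `1`. -/
theorem injCode_neighbour_transitive (m q : ℕ) (hm : 2 ≤ m) (hmq : m < q) :
    (∃ X : Subgroup (Equiv.Perm (Fin m → Fin q)), NbrTransitive X (injCode (Fin m) q)) ∧
    autCode (injCode (Fin m) q) = diagL (Fin m) q ∧
    minDist (injCode (Fin m) q) = 1 := by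
  exact ⟨⟨diagL (Fin m) q, diagL_le_autH, injCode_isOrbit hmq, injCode_cell_one_isOrbit hm hmq⟩,
    le_antisymm (autCode_le_diagL hm hmq) diagL_le_autCode,
    injCode_minDist hm hmq⟩
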